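/- (Generic validity of the small divisor condition.) For every real number γ > 1, the set of m ∈ (0,1) for which there exists a constant c > 0 such that |p + q·m| ≥ c · (p² + q²)^{−γ/2} for all (p,q) ∈ ℤ² \ {(0,0)} has full Lebesgue measure in (0,1); that is, its complement in (0,1) is a Lebesgue null set. -/

import Mathlib

open MeasureTheory
open scoped ENNReal

theorem stmt15 (γ : ℝ) (hγ : 1 < γ) :
    volume (Set.Ioo (0 : ℝ) 1 \
      {m : ℝ | ∃ c > (0 : ℝ), ∀ p q : ℤ, (p ≠ 0 ∨ q ≠ 0) →
        c * (((p : ℝ) ^ 2 + (q : ℝ) ^ 2) ^ (-(γ / 2))) ≤ |(p : ℝ) + (q : ℝ) * m|}) = 0 := by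
  have hγ0 : (0 : ℝ) < γ := lt_trans one_pos hγ
  set B : Set ℝ := Set.Ioo (0 : ℝ) 1 \
      {m : ℝ | ∃ c > (0 : ℝ), ∀ p q : ℤ, (p ≠ 0 ∨ q ≠ 0) →
        c * (((p : ℝ) ^ 2 + (q : ℝ) ^ 2) ^ (-(γ / 2))) ≤ |(p : ℝ) + (q : ℝ) * m|} with hB
  -- the covering sets
  set S : ℝ → ℤ → ℤ → Set ℝ := fun c q p =>
    if q ≠ 0 ∧ |p| ≤ |q| then
      Metric.ball (-(p : ℝ) / q) (c * |(q : ℝ)| ^ (-γ) / |(q : ℝ)|) else ∅ with hSdef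
  -- Step 1: inclusion
  have hsub : ∀ c : ℝ, 0 < c → c ≤ 1 → B ⊆ ⋃ (q : ℤ) (p : ℤ), S c q p := by
    intro c hc hc1 m hm
    obtain ⟨hm01, hm2⟩ := hm
    simp only [Set.mem_setOf_eq] at hm2
    push_neg at hm2
    obtain ⟨p, q, hpq, hlt⟩ := hm2 c hc
    have hbase : (1 : ℝ) ≤ (p : ℝ) ^ 2 + (q : ℝ) ^ 2 := by
      rcases hpq with hp | hq
      · have h1 : (1 : ℝ) ≤ |(p : ℝ)| := by
          rw [← Int.cast_abs]; exact_mod_cast Int.one_le_abs hp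
        nlinarith [sq_nonneg ((q : ℝ)), abs_nonneg ((p : ℝ)), sq_abs ((p : ℝ))]
      · have h1 : (1 : ℝ) ≤ |(q : ℝ)| := by
          rw [← Int.cast_abs]; exact_mod_cast Int.one_le_abs hq
        nlinarith [sq_nonneg ((p : ℝ)), abs_nonneg ((q : ℝ)), sq_abs ((q : ℝ))]
    have hX1 : ((p : ℝ) ^ 2 + (q : ℝ) ^ 2) ^ (-(γ / 2)) ≤ 1 :=
      Real.rpow_le_one_of_one_le_of_nonpos hbase (by linarith)
    have hXpos : (0 : ℝ) < ((p : ℝ) ^ 2 + (q : ℝ) ^ 2) ^ (-(γ / 2)) :=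
      Real.rpow_pos_of_pos (by linarith) _
    have hq0 : q ≠ 0 := by
      intro hq
      subst hq
      have hp : p ≠ 0 := hpq.resolve_right (by simp)
      have h1 : (1 : ℝ) ≤ |(p : ℝ)| := by
        rw [← Int.cast_abs]; exact_mod_cast Int.one_le_abs hp
      have : |(p : ℝ) + (0 : ℤ) * m| = |(p : ℝ)| := by
        push_cast; ring_nf
      rw [this] at hlt
      nlinarith
    have hq1 : (1 : ℝ) ≤ |(q : ℝ)| := by
      rw [← Int.cast_abs]; exact_mod_cast Int.one_le_abs hq0
    have hqpos : (0 : ℝ) < |(q : ℝ)| := by linarith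
    -- |p| ≤ |q|
    have hpabs : |p| ≤ |q| := by
      have h1 : |(p : ℝ)| ≤ |(p : ℝ) + q * m| + |(q : ℝ) * m| := by
        calc |(p : ℝ)| = |((p : ℝ) + q * m) - (q : ℝ) * m| := by ring_nf
          _ ≤ |(p : ℝ) + q * m| + |(q : ℝ) * m| := abs_sub _ _
      have h2 : |(q : ℝ) * m| ≤ |(q : ℝ)| := by
        rw [abs_mul, abs_of_pos hm01.1]
        nlinarith [hm01.2]
      have h3 : |(p : ℝ)| < 1 + |(q : ℝ)| := by
        nlinarith
      have : (|p| : ℝ) < (|q| : ℝ) + 1 := by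
        push_cast [Int.cast_abs]
        linarith
      have := Int.lt_add_one_iff.mp (by exact_mod_cast this)
      exact this
    -- estimate of rpow: base ≥ q²
    have hmono : ((p : ℝ) ^ 2 + (q : ℝ) ^ 2) ^ (-(γ / 2)) ≤ |(q : ℝ)| ^ (-γ) := by
      have hq2 : (0 : ℝ) < (q : ℝ) ^ 2 := by positivity
      have h1 : ((p : ℝ) ^ 2 + (q : ℝ) ^ 2) ^ (-(γ / 2)) ≤ ((q : ℝ) ^ 2) ^ (-(γ / 2)) :=
        Real.rpow_le_rpow_of_nonpos hq2 (by nlinarith [sq_nonneg ((p : ℝ))]) (by linarith)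
      have h2 : ((q : ℝ) ^ 2) ^ (-(γ / 2)) = |(q : ℝ)| ^ (-γ) := by
        rw [← sq_abs, ← Real.rpow_natCast |(q : ℝ)| 2, ← Real.rpow_mul (abs_nonneg _)]
        rw [show ((2 : ℕ) : ℝ) * -(γ / 2) = -γ by push_cast; ring]
      rw [h2] at h1; exact h1
    have hne : (q : ℝ) ≠ 0 := by exact_mod_cast hq0
    have hmem : m ∈ Metric.ball (-(p : ℝ) / q) (c * |(q : ℝ)| ^ (-γ) / |(q : ℝ)|) := by
      rw [Metric.mem_ball, Real.dist_eq]
      have heq : m - -(p : ℝ) / q = ((p : ℝ) + q * m) / q := by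
        field_simp
        ring
      rw [heq, abs_div]
      have hnum : |(p : ℝ) + q * m| < c * |(q : ℝ)| ^ (-γ) :=
        lt_of_lt_of_le hlt (by nlinarith)
      gcongr
    simp only [hSdef, Set.mem_iUnion]
    refine ⟨q, p, ?_⟩
    rw [if_pos ⟨hq0, hpabs⟩]
    exact hmem
  -- Step 2: measure of each piece
  have hvol : ∀ c : ℝ, 0 < c → ∀ q p : ℤ,
      volume (S c q p) = if q ≠ 0 ∧ |p| ≤ |q| then
        ENNReal.ofReal (2 * (c * |(q : ℝ)| ^ (-γ) / |(q : ℝ)|)) else 0 := by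
    intro c hc q p
    rw [hSdef]
    by_cases h : q ≠ 0 ∧ |p| ≤ |q|
    · simp only [if_pos h, Real.volume_ball]
    · simp only [if_neg h, measure_empty]
  -- inner sum bound
  have hinner : ∀ c : ℝ, 0 < c → ∀ q : ℤ,
      (∑' p : ℤ, volume (S c q p)) ≤ ENNReal.ofReal (c * (6 * |(q : ℝ)| ^ (-γ))) := by
    intro c hc q
    by_cases hq0 : q = 0
    · have h0 : ∀ p : ℤ, volume (S c q p) = 0 := by
        intro p; rw [hvol c hc]; simp [hq0]
      calc (∑' p : ℤ, volume (S c q p)) = ∑' _ : ℤ, (0 : ℝ≥0∞) := tsum_congr h0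
        _ = 0 := tsum_zero
        _ ≤ _ := zero_le
    · have hq1 : (1 : ℝ) ≤ |(q : ℝ)| := by
        rw [← Int.cast_abs]; exact_mod_cast Int.one_le_abs hq0
      have hqpos : (0 : ℝ) < |(q : ℝ)| := by linarith
      set C : ℝ≥0∞ := ENNReal.ofReal (2 * (c * |(q : ℝ)| ^ (-γ) / |(q : ℝ)|)) with hC
      have hzero : ∀ p : ℤ, p ∉ Finset.Icc (-|q|) |q| → volume (S c q p) = 0 := by
        intro p hp
        rw [hvol c hc, if_neg]
        rintro ⟨-, habs⟩
        exact hp (Finset.mem_Icc.mpr (abs_le.mp habs))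
      rw [tsum_eq_sum hzero]
      have hle : ∀ p ∈ Finset.Icc (-|q|) |q|, volume (S c q p) ≤ C := by
        intro p _
        rw [hvol c hc]
        split_ifs
        · exact le_rfl
        · exact zero_le
      calc ∑ p ∈ Finset.Icc (-|q|) |q|, volume (S c q p)
          ≤ (Finset.Icc (-|q|) |q|).card • C := Finset.sum_le_card_nsmul _ _ _ hle
        _ = ((Finset.Icc (-|q|) |q|).card : ℝ≥0∞) * C := by rw [nsmul_eq_mul]
        _ ≤ ENNReal.ofReal (c * (6 * |(q : ℝ)| ^ (-γ))) := by
            rw [Int.card_Icc]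
            have hcard : ((|q| + 1 - -|q|).toNat : ℝ) = 2 * |(q : ℝ)| + 1 := by
              have h0 : (0 : ℤ) ≤ |q| + 1 - -|q| := by
                have := abs_nonneg q; linarith
              have h1 : ((|q| + 1 - -|q|).toNat : ℝ) = ((|q| + 1 - -|q| : ℤ) : ℝ) := by
                exact_mod_cast Int.toNat_of_nonneg h0
              rw [h1]
              push_cast [Int.cast_abs]
              ring
            rw [hC, ← ENNReal.ofReal_natCast, ← ENNReal.ofReal_mul (by positivity)]
            apply ENNReal.ofReal_le_ofReal
            rw [hcard]
            have ht : (0 : ℝ) ≤ |(q : ℝ)| ^ (-γ) := Real.rpow_nonneg (abs_nonneg _) _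
            have hinv : |(q : ℝ)|⁻¹ ≤ 1 := by
              rw [inv_le_one_iff₀]; right; exact hq1
            have hexp : (2 * |(q : ℝ)| + 1) * (2 * (c * |(q : ℝ)| ^ (-γ) / |(q : ℝ)|)) =
                2 * c * |(q : ℝ)| ^ (-γ) * (2 + |(q : ℝ)|⁻¹) := by
              field_simp
            rw [hexp]
            nlinarith [mul_nonneg hc.le ht]
  -- Step 3: summability
  have hsummable : Summable (fun q : ℤ => 6 * |(q : ℝ)| ^ (-γ)) := by
    apply Summable.mul_left
    have hnat : Summable (fun n : ℕ => |((n : ℤ) : ℝ)| ^ (-γ)) := by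
      refine (Real.summable_nat_rpow.mpr (show -γ < -1 by linarith)).congr fun n => ?_
      simp
    refine Summable.of_nat_of_neg hnat (hnat.congr fun n => ?_)
    push_cast
    rw [abs_neg]
  set K : ℝ≥0∞ := ∑' q : ℤ, ENNReal.ofReal (6 * |(q : ℝ)| ^ (-γ)) with hK
  have hKne : K ≠ ⊤ := by
    rw [hK, ← ENNReal.ofReal_tsum_of_nonneg
      (fun q => by positivity) hsummable]
    exact ENNReal.ofReal_ne_top
  have hmain : ∀ c : ℝ, 0 < c → c ≤ 1 → volume B ≤ ENNReal.ofReal c * K := by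
    intro c hc hc1
    calc volume B ≤ volume (⋃ (q : ℤ) (p : ℤ), S c q p) := measure_mono (hsub c hc hc1)
      _ ≤ ∑' q : ℤ, volume (⋃ p : ℤ, S c q p) := measure_iUnion_le _
      _ ≤ ∑' q : ℤ, ∑' p : ℤ, volume (S c q p) :=
          ENNReal.tsum_le_tsum fun q => measure_iUnion_le _
      _ ≤ ∑' q : ℤ, ENNReal.ofReal (c * (6 * |(q : ℝ)| ^ (-γ))) :=
          ENNReal.tsum_le_tsum fun q => hinner c hc q
      _ = ENNReal.ofReal c * K := by
          rw [hK, ← ENNReal.tsum_mul_left]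
          exact tsum_congr fun q => ENNReal.ofReal_mul hc.le
  have htend : Filter.Tendsto (fun n : ℕ => ENNReal.ofReal (1 / (n + 1)) * K)
      Filter.atTop (nhds 0) := by
    have h1 : Filter.Tendsto (fun n : ℕ => ENNReal.ofReal (1 / (n + 1)))
        Filter.atTop (nhds 0) := by
      rw [← ENNReal.ofReal_zero]
      exact ENNReal.tendsto_ofReal tendsto_one_div_add_atTop_nhds_zero_nat
    simpa using ENNReal.Tendsto.mul_const h1 (Or.inr hKne)
  have hle0 : volume B ≤ 0 := by
    refine ge_of_tendsto' htend fun n => ?_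
    refine hmain (1 / (n + 1)) (by positivity) ?_
    rw [div_le_one (by positivity)]
    linarith [Nat.cast_nonneg (α := ℝ) n]
  exact le_antisymm hle0 (zero_le)
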